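/- Let R > 0, κ_p > 0, κ_n > 0, Q > 0, S > 0, and Q', S' ∈ ℝ. Let φ, φₓ : (0,R] → ℝ be functions such that r ↦ r·exp(φ(r)) and r ↦ r·exp(−φ(r)) are integrable on (0,R). Define the leading-order axial fluxes u_p(r) = −κ_p·(pₓ(r) + p(r)·φₓ(r)) and u_n(r) = −κ_n·(nₓ(r) − n(r)·φₓ(r)), where p(r) = S·e^{−φ(r)}, pₓ(r) = S'·e^{−φ(r)} − S·e^{−φ(r)}·φₓ(r), n(r) = Q·e^{φ(r)}, and nₓ(r) = Q'·e^{φ(r)} + Q·e^{φ(r)}·φₓ(r). Then the cross-sectional current I = ∫₀^R r·(u_p(r) − u_n(r)) dr satisfies I = R²·√(S·Q)·(κ_n·G₂·(Q'/Q) − κ_p·G₁·(S'/S)), where ψ(ξ) = φ(R·ξ) − (1/2)·log(S/Q), G₁ = ∫₀¹ ξ·exp(−ψ(ξ)) dξ and G₂ = ∫₀¹ ξ·exp(ψ(ξ)) dξ. -/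

import Mathlib

open Real Set Filter MeasureTheory

private lemma stmt_15_aux (κp κn Q S Q' S' A B X y z R : ℝ) (hR : R ≠ 0)
    (hQ : Q ≠ 0) (hS : S ≠ 0) (hy : X * y = Q) (hz : X * z = S) :
    (-κp * S') * A + (κn * Q') * B =
      R ^ 2 * X * (κn * (y * (R⁻¹ * R⁻¹ * B)) * (Q' / Q) -
        κp * (z * (R⁻¹ * R⁻¹ * A)) * (S' / S)) := by
  field_simp
  linear_combination (-κn * Q' * B * S) * hy + (κp * S' * A * Q) * hz

private lemma stmt_15_cov (R : ℝ) (hR : 0 < R) (g : ℝ → ℝ) :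
    (∫ ξ in Set.Ioo (0:ℝ) 1, ξ * g (R * ξ))
      = R⁻¹ * R⁻¹ * ∫ r in Set.Ioo (0:ℝ) R, r * g r := by
  have hRne : R ≠ 0 := hR.ne'
  rw [← MeasureTheory.integral_Ioc_eq_integral_Ioo,
      ← intervalIntegral.integral_of_le (by norm_num : (0:ℝ) ≤ 1),
      ← MeasureTheory.integral_Ioc_eq_integral_Ioo,
      ← intervalIntegral.integral_of_le hR.le]
  have h1 : ∀ ξ : ℝ, ξ * g (R * ξ) = R⁻¹ * ((fun r => r * g r) (R * ξ)) := by
    intro ξ; field_simp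
  simp_rw [h1]
  rw [intervalIntegral.integral_const_mul,
      intervalIntegral.integral_comp_mul_left (fun r => r * g r) hRne]
  simp [smul_eq_mul]; ring

/-- The leading-order current formula of the Quasi-1D PNP model: with
Boltzmann-form concentrations `p = S e^{-φ}`, `n = Q e^{φ}`, axial derivatives
`pₓ, nₓ` given by the chain rule, and fluxes `u_p = -κ_p (pₓ + p φₓ)`,
`u_n = -κ_n (nₓ - n φₓ)`, the cross-sectional current
`I = ∫₀^R r (u_p - u_n) dr` equals
`R² √(SQ) (κ_n G₂ Q'/Q - κ_p G₁ S'/S)`, where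
`ψ(ξ) = φ(Rξ) - (1/2)log(S/Q)`, `G₁ = ∫₀¹ ξ e^{-ψ} dξ`, `G₂ = ∫₀¹ ξ e^{ψ} dξ`. -/
theorem stmt_15 (R κp κn Q S Q' S' : ℝ) (hR : 0 < R) (hκp : 0 < κp)
    (hκn : 0 < κn) (hQ : 0 < Q) (hS : 0 < S) (φ φx : ℝ → ℝ)
    (hintp : IntegrableOn (fun r => r * Real.exp (φ r)) (Set.Ioo 0 R))
    (hintm : IntegrableOn (fun r => r * Real.exp (-φ r)) (Set.Ioo 0 R)) :
    (∫ r in Set.Ioo (0:ℝ) R,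
        r * ((-κp * ((S' * Real.exp (-φ r) - S * Real.exp (-φ r) * φx r) +
                (S * Real.exp (-φ r)) * φx r)) -
             (-κn * ((Q' * Real.exp (φ r) + Q * Real.exp (φ r) * φx r) -
                (Q * Real.exp (φ r)) * φx r)))) =
      R ^ 2 * Real.sqrt (S * Q) *
        (κn * (∫ ξ in Set.Ioo (0:ℝ) 1,
            ξ * Real.exp (φ (R * ξ) - (1/2) * Real.log (S / Q))) * (Q' / Q) -
         κp * (∫ ξ in Set.Ioo (0:ℝ) 1,
            ξ * Real.exp (-(φ (R * ξ) - (1/2) * Real.log (S / Q)))) * (S' / S)) := by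
  have hRne : R ≠ 0 := hR.ne'
  set c : ℝ := (1/2) * Real.log (S / Q) with hc
  set A : ℝ := ∫ r in Set.Ioo (0:ℝ) R, r * Real.exp (-φ r) with hA
  set B : ℝ := ∫ r in Set.Ioo (0:ℝ) R, r * Real.exp (φ r) with hB
  -- the two G integrals
  have hG2 : (∫ ξ in Set.Ioo (0:ℝ) 1, ξ * Real.exp (φ (R * ξ) - c))
      = Real.exp (-c) * (R⁻¹ * R⁻¹ * B) := by
    have h1 : ∀ ξ : ℝ, ξ * Real.exp (φ (R * ξ) - c)
        = Real.exp (-c) * (ξ * Real.exp (φ (R * ξ))) := by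
      intro ξ
      rw [Real.exp_sub, Real.exp_neg, div_eq_mul_inv]
      ring
    simp_rw [h1]
    rw [MeasureTheory.integral_const_mul, stmt_15_cov R hR (fun r => Real.exp (φ r))]
  have hG1 : (∫ ξ in Set.Ioo (0:ℝ) 1, ξ * Real.exp (-(φ (R * ξ) - c)))
      = Real.exp c * (R⁻¹ * R⁻¹ * A) := by
    have h1 : ∀ ξ : ℝ, ξ * Real.exp (-(φ (R * ξ) - c))
        = Real.exp c * (ξ * Real.exp (-φ (R * ξ))) := by
      intro ξ
      rw [neg_sub, Real.exp_sub, div_eq_mul_inv, ← Real.exp_neg]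
      ring
    simp_rw [h1]
    rw [MeasureTheory.integral_const_mul, stmt_15_cov R hR (fun r => Real.exp (-φ r))]
  -- the LHS
  have hL : (∫ r in Set.Ioo (0:ℝ) R,
        r * ((-κp * ((S' * Real.exp (-φ r) - S * Real.exp (-φ r) * φx r) +
                (S * Real.exp (-φ r)) * φx r)) -
             (-κn * ((Q' * Real.exp (φ r) + Q * Real.exp (φ r) * φx r) -
                (Q * Real.exp (φ r)) * φx r))))
      = (-κp * S') * A + (κn * Q') * B := by
    have h1 : ∀ r : ℝ,
        r * ((-κp * ((S' * Real.exp (-φ r) - S * Real.exp (-φ r) * φx r) +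
                (S * Real.exp (-φ r)) * φx r)) -
             (-κn * ((Q' * Real.exp (φ r) + Q * Real.exp (φ r) * φx r) -
                (Q * Real.exp (φ r)) * φx r)))
        = (-κp * S') * (r * Real.exp (-φ r)) + (κn * Q') * (r * Real.exp (φ r)) := by
      intro r; ring
    simp_rw [h1]
    rw [MeasureTheory.integral_add ((hintm.const_mul _)) ((hintp.const_mul _)),
        MeasureTheory.integral_const_mul, MeasureTheory.integral_const_mul]
  -- sqrt / exp algebra
  have hsS : (0:ℝ) < Real.sqrt S := Real.sqrt_pos.mpr hS
  have hsQ : (0:ℝ) < Real.sqrt Q := Real.sqrt_pos.mpr hQ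
  have hS2 : Real.sqrt S * Real.sqrt S = S := Real.mul_self_sqrt hS.le
  have hQ2 : Real.sqrt Q * Real.sqrt Q = Q := Real.mul_self_sqrt hQ.le
  have hzz : Real.exp c = Real.sqrt S / Real.sqrt Q := by
    rw [hc, mul_comm, ← Real.rpow_def_of_pos (div_pos hS hQ), ← Real.sqrt_eq_rpow,
        Real.sqrt_div hS.le]
  have hyy : Real.exp (-c) = Real.sqrt Q / Real.sqrt S := by
    rw [Real.exp_neg, hzz]; field_simp
  have hsqm : Real.sqrt (S * Q) = Real.sqrt S * Real.sqrt Q := Real.sqrt_mul hS.le Q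
  have hy : Real.sqrt (S * Q) * Real.exp (-c) = Q := by
    rw [hsqm, hyy]; field_simp; linear_combination hQ2
  have hz : Real.sqrt (S * Q) * Real.exp c = S := by
    rw [hsqm, hzz]; field_simp; linear_combination hS2
  rw [hL, hG1, hG2]
  exact stmt_15_aux κp κn Q S Q' S' A B (Real.sqrt (S * Q)) (Real.exp (-c))
    (Real.exp c) R hRne hQ.ne' hS.ne' hy hz
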